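/- arXiv:1411.4218 — 4 statements merged into one kernel-verified Lean document; each statement's English description precedes it below -/
import Mathlib

section
/- Let f : ℝⁿ → ℝ be a convex function that is M-Lipschitz with respect to the Euclidean norm, and for τ > 0 define the smoothed function f_τ(x) = E[f(x + τ s̃)], where s̃ is uniformly distributed on the closed Euclidean unit ball. Then f_τ is convex and for every x one has 0 ≤ f_τ(x) − f(x) ≤ M τ. -/
open MeasureTheory

/-- Spherical (ball) smoothing of a convex Lipschitz function: convexity and
`0 ≤ f_τ(x) − f(x) ≤ M τ`. -/
theorem smoothing_lipschitz_bound (n : ℕ) (hn : 0 < n)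
    (f : EuclideanSpace ℝ (Fin n) → ℝ) (M τ : ℝ) (hτ : 0 < τ)
    (hconv : ConvexOn ℝ Set.univ f)
    (hlip : ∀ x y, |f x - f y| ≤ M * ‖x - y‖)
    (μ : Measure (EuclideanSpace ℝ (Fin n)))
    (hμ : μ = (volume (Metric.closedBall (0 : EuclideanSpace ℝ (Fin n)) 1))⁻¹ •
      volume.restrict (Metric.closedBall (0 : EuclideanSpace ℝ (Fin n)) 1))
    (fτ : EuclideanSpace ℝ (Fin n) → ℝ)
    (hfτ : ∀ x, fτ x = ∫ s, f (x + τ • s) ∂μ) :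
    ConvexOn ℝ Set.univ fτ ∧ ∀ x, 0 ≤ fτ x - f x ∧ fτ x - f x ≤ M * τ := by
  classical
  set B : Set (EuclideanSpace ℝ (Fin n)) := Metric.closedBall 0 1 with hB
  have hBmeas : MeasurableSet B := measurableSet_closedBall
  have hBcomp : IsCompact B := isCompact_closedBall _ _
  have hvol_ne_top : volume B ≠ ⊤ := hBcomp.measure_lt_top.ne
  have hvol_pos : 0 < volume B := Metric.measure_closedBall_pos volume 0 one_pos
  -- M is nonnegative
  have hMnonneg : 0 ≤ M := by
    haveI : Nonempty (Fin n) := ⟨⟨0, hn⟩⟩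
    obtain ⟨x, y, hxy⟩ := exists_pair_ne (EuclideanSpace ℝ (Fin n))
    have h1 := hlip x y
    have h2 : 0 < ‖x - y‖ := by
      rw [norm_pos_iff, sub_ne_zero]; exact hxy
    nlinarith [abs_nonneg (f x - f y)]
  -- f is continuous
  have hf_cont : Continuous f := by
    have : LipschitzWith (Real.toNNReal M) f := by
      apply LipschitzWith.of_dist_le_mul
      intro x y
      rw [Real.dist_eq, dist_eq_norm, Real.coe_toNNReal M hMnonneg]
      exact hlip x y
    exact this.continuous
  -- μ is a probability measure
  haveI hprob : IsProbabilityMeasure μ := by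
    constructor
    rw [hμ]
    rw [Measure.smul_apply, Measure.restrict_apply_univ, smul_eq_mul]
    exact ENNReal.inv_mul_cancel hvol_pos.ne' hvol_ne_top
  -- continuous functions are integrable w.r.t. μ
  have hint : ∀ (g : EuclideanSpace ℝ (Fin n) → ℝ), Continuous g → Integrable g μ := by
    intro g hg
    rw [hμ]
    exact (hg.continuousOn.integrableOn_compact hBcomp).smul_measure
      (ENNReal.inv_ne_top.mpr hvol_pos.ne')
  have hcont : ∀ x : EuclideanSpace ℝ (Fin n), Continuous (fun s => f (x + τ • s)) := by
    intro x
    exact hf_cont.comp (continuous_const.add (continuous_id.const_smul τ))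
  -- μ is invariant under negation
  have hmap : μ.map Neg.neg = μ := by
    rw [hμ, Measure.map_smul]
    congr 1
    have hpre : (Neg.neg ⁻¹' B : Set (EuclideanSpace ℝ (Fin n))) = B := by
      ext s
      simp [hB, mem_closedBall_zero_iff]
    calc (volume.restrict B).map Neg.neg
        = ((volume.map Neg.neg).restrict B) := by
          rw [Measure.restrict_map measurable_neg hBmeas, hpre]
      _ = volume.restrict B := by rw [Measure.map_neg_eq_self]
  have hneg : ∀ (g : EuclideanSpace ℝ (Fin n) → ℝ), Continuous g →
      ∫ s, g (-s) ∂μ = ∫ s, g s ∂μ := by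
    intro g hg
    conv_rhs => rw [← hmap]
    rw [integral_map measurable_neg.aemeasurable
      (hg.aestronglyMeasurable.mono_measure le_rfl |>.mono_ac (by rw [hmap]))]
  -- a.e. s is in the ball
  have hae : ∀ᵐ s ∂μ, s ∈ B := by
    rw [hμ]
    exact Measure.ae_smul_measure (ae_restrict_mem hBmeas) _
  constructor
  · -- convexity
    refine ⟨convex_univ, ?_⟩
    intro x _ y _ a b ha hb hab
    rw [hfτ, hfτ, hfτ]
    have h1 : Integrable (fun s => f (x + τ • s)) μ := hint _ (hcont x)
    have h2 : Integrable (fun s => f (y + τ • s)) μ := hint _ (hcont y)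
    calc ∫ s, f (a • x + b • y + τ • s) ∂μ
        ≤ ∫ s, a * f (x + τ • s) + b * f (y + τ • s) ∂μ := by
          apply integral_mono (hint _ (hcont _)) ((h1.const_mul a).add (h2.const_mul b))
          intro s
          have h := hconv.2 (Set.mem_univ (x + τ • s)) (Set.mem_univ (y + τ • s)) ha hb hab
          have heq : a • (x + τ • s) + b • (y + τ • s) = a • x + b • y + τ • s := by
            rw [smul_add, smul_add]
            rw [show a • x + a • τ • s + (b • y + b • τ • s)
              = a • x + b • y + (a + b) • τ • s by rw [add_smul]; abel]
            rw [hab, one_smul]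
          rw [heq] at h
          simpa using h
      _ = a * ∫ s, f (x + τ • s) ∂μ + b * ∫ s, f (y + τ • s) ∂μ := by
          rw [integral_add (h1.const_mul a) (h2.const_mul b),
            integral_const_mul, integral_const_mul]
  · -- bounds
    intro x
    have hgc := hcont x
    have hgi : Integrable (fun s => f (x + τ • s)) μ := hint _ hgc
    have hgc' : Continuous (fun s => f (x - τ • s)) := by
      exact hf_cont.comp (continuous_const.sub (continuous_id.const_smul τ))
    have hgi' : Integrable (fun s => f (x - τ • s)) μ := hint _ hgc'
    have hsym : ∫ s, f (x - τ • s) ∂μ = ∫ s, f (x + τ • s) ∂μ := by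
      have h := hneg (fun s => f (x + τ • s)) hgc
      simpa [smul_neg, sub_eq_add_neg] using h
    constructor
    · -- lower bound
      have hkey : f x ≤ ∫ s, (f (x + τ • s) + f (x - τ • s)) / 2 ∂μ := by
        have hpt : ∀ s, f x ≤ (f (x + τ • s) + f (x - τ • s)) / 2 := by
          intro s
          have h := hconv.2 (Set.mem_univ (x + τ • s)) (Set.mem_univ (x - τ • s))
            (by norm_num : (0:ℝ) ≤ 1/2) (by norm_num : (0:ℝ) ≤ 1/2) (by norm_num)
          have heq : (1/2 : ℝ) • (x + τ • s) + (1/2 : ℝ) • (x - τ • s) = x := by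
            rw [smul_add, smul_sub, show ((1:ℝ)/2) • x + ((1:ℝ)/2) • τ • s
              + (((1:ℝ)/2) • x - ((1:ℝ)/2) • τ • s)
              = (((1:ℝ)/2) + ((1:ℝ)/2)) • x by rw [add_smul]; abel]
            norm_num
          rw [heq] at h
          simp only [smul_eq_mul] at h
          linarith
        calc f x = ∫ _, f x ∂μ := by simp
          _ ≤ _ := integral_mono (integrable_const _) ((hgi.add hgi').div_const 2) hpt
      have heq2 : ∫ s, (f (x + τ • s) + f (x - τ • s)) / 2 ∂μ = ∫ s, f (x + τ • s) ∂μ := by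
        simp_rw [div_eq_mul_inv]
        rw [integral_mul_const, integral_add hgi hgi', hsym]
        ring
      rw [hfτ]
      linarith [hkey, heq2.symm ▸ hkey]
    · -- upper bound
      rw [hfτ]
      have h1 : ∫ s, f (x + τ • s) ∂μ ≤ ∫ _, f x + M * τ ∂μ := by
        apply integral_mono_ae hgi (integrable_const _)
        filter_upwards [hae] with s hs
        have hl := hlip (x + τ • s) x
        have hns : ‖s‖ ≤ 1 := by rwa [hB, mem_closedBall_zero_iff] at hs
        have hnorm : ‖x + τ • s - x‖ = τ * ‖s‖ := by
          rw [add_sub_cancel_left, norm_smul, Real.norm_eq_abs, abs_of_pos hτ]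
        rw [hnorm] at hl
        have := le_abs_self (f (x + τ • s) - f x)
        nlinarith [norm_nonneg s, mul_nonneg hMnonneg hτ.le]
      rw [integral_const] at h1
      simp only [measure_univ, probReal_univ, ENNReal.toReal_one, one_smul, smul_eq_mul] at h1
      linarith
end

section
/- Let f : ℝⁿ → ℝ be convex with L-Lipschitz gradient with respect to the Euclidean norm, and for τ > 0 define f_τ(x) = E[f(x + τ s̃)] with s̃ uniform on the Euclidean unit ball. Then 0 ≤ f_τ(x) − f(x) ≤ L τ² / 2 for every x. -/
open MeasureTheory

open scoped RealInnerProductSpace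

variable {F : Type*} [NormedAddCommGroup F] [InnerProductSpace ℝ F] [CompleteSpace F]

lemma curve_hasDerivAt (x v : F) (t : ℝ) :
    HasDerivAt (fun t : ℝ => t • v + x) v t := by
  simpa using ((hasDerivAt_id t).smul_const v).add_const x

lemma aux_lower {f : F → ℝ} (hconv : ConvexOn ℝ Set.univ f)
    {x gx : F} (hg : HasGradientAt f gx x) (v : F) :
    f x + ⟪gx, v⟫ ≤ f (x + v) := by
  set φ : ℝ → ℝ := fun t => f (t • v + x) with hφ
  have hφconv : ConvexOn ℝ Set.univ φ := by
    have := hconv.comp_affineMap (AffineMap.lineMap (x : F) (x + v))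
    have heq : (f ∘ ⇑(AffineMap.lineMap (x : F) (x + v))) = φ := by
      funext t
      simp [Function.comp, AffineMap.lineMap_apply, φ, add_comm]
    rw [heq] at this
    simpa using this
  have hder : HasDerivAt φ ⟪gx, v⟫ 0 := by
    have h0 : HasDerivAt (fun t : ℝ => t • v + x) v 0 := curve_hasDerivAt x v 0
    have hgx : HasFDerivAt f ((InnerProductSpace.toDual ℝ F) gx) ((0:ℝ) • v + x) := by
      simpa using hg.hasFDerivAt
    have := hgx.comp_hasDerivAt 0 h0
    simp at this
    exact this
  have hs := hφconv.le_slope_of_hasDerivAt (Set.mem_univ (0:ℝ)) (Set.mem_univ (1:ℝ))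
    zero_lt_one hder
  have : slope φ 0 1 = f (x + v) - f x := by
    simp [slope, φ, add_comm]
  rw [this] at hs
  linarith

lemma aux_upper {f : F → ℝ} {g : F → F} (hgrad : ∀ x, HasGradientAt f (g x) x)
    {L : ℝ} (hlip : ∀ x y, ‖g x - g y‖ ≤ L * ‖x - y‖) (x v : F) :
    f (x + v) ≤ f x + ⟪g x, v⟫ + L * ‖v‖ ^ 2 / 2 := by
  set ψ : ℝ → ℝ := fun t => f (t • v + x) - t * ⟪g x, v⟫ - L * t ^ 2 * ‖v‖ ^ 2 / 2 with hψ
  have hder : ∀ t : ℝ, HasDerivAt ψ (⟪g (t • v + x), v⟫ - ⟪g x, v⟫ - L * t * ‖v‖ ^ 2) t := by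
    intro t
    have h0 := curve_hasDerivAt x v t
    have h1 : HasDerivAt (fun t : ℝ => f (t • v + x)) ⟪g (t • v + x), v⟫ t := by
      have := (hgrad (t • v + x)).hasFDerivAt.comp_hasDerivAt t h0
      simp at this
      exact this
    have h2 : HasDerivAt (fun t : ℝ => t * ⟪g x, v⟫) ⟪g x, v⟫ t := by
      simpa using (hasDerivAt_id t).mul_const (⟪g x, v⟫)
    have h3 : HasDerivAt (fun t : ℝ => L * t ^ 2 * ‖v‖ ^ 2 / 2) (L * t * ‖v‖ ^ 2) t := by
      have h4 := ((((hasDerivAt_pow 2 t).const_mul L).mul_const (‖v‖ ^ 2)).div_const 2)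
      refine h4.congr_deriv ?_
      ring
    exact (h1.sub h2).sub h3
  have hA : AntitoneOn ψ (Set.Icc (0:ℝ) 1) := by
    apply antitoneOn_of_deriv_nonpos (convex_Icc 0 1)
    · exact fun t _ => (hder t).continuousAt.continuousWithinAt
    · exact fun t _ => (hder t).differentiableAt.differentiableWithinAt
    · intro t ht
      rw [interior_Icc] at ht
      rw [(hder t).deriv]
      have h5 : ⟪g (t • v + x), v⟫ - ⟪g x, v⟫ = ⟪g (t • v + x) - g x, v⟫ :=
        (inner_sub_left _ _ _).symm
      have h6 : ⟪g (t • v + x) - g x, v⟫ ≤ ‖g (t • v + x) - g x‖ * ‖v‖ :=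
        real_inner_le_norm _ _
      have h7 : ‖g (t • v + x) - g x‖ ≤ L * (t * ‖v‖) := by
        have := hlip (t • v + x) x
        rwa [add_sub_cancel_right, norm_smul, Real.norm_eq_abs, abs_of_pos ht.1] at this
      nlinarith [norm_nonneg v, norm_nonneg (g (t • v + x) - g x)]
  have hle := hA (Set.left_mem_Icc.2 zero_le_one) (Set.right_mem_Icc.2 zero_le_one) zero_le_one
  have hψ1 : ψ 1 = f (x + v) - ⟪g x, v⟫ - L * ‖v‖ ^ 2 / 2 := by
    simp [ψ, add_comm]
  have hψ0 : ψ 0 = f x := by simp [ψ]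
  rw [hψ1, hψ0] at hle
  linarith

lemma aux_int_zero (n : ℕ) (u : EuclideanSpace ℝ (Fin n)) :
    ∫ s in Metric.closedBall (0 : EuclideanSpace ℝ (Fin n)) 1, ⟪u, s⟫ ∂volume = 0 := by
  set K := Metric.closedBall (0 : EuclideanSpace ℝ (Fin n)) 1 with hKdef
  have hK : MeasurableSet K := measurableSet_closedBall
  have h2 : ∀ s, K.indicator (fun s => ⟪u, s⟫) (-s) = - K.indicator (fun s => ⟪u, s⟫) s := by
    intro s
    by_cases hs : s ∈ K
    · have hs' : -s ∈ K := by
        rw [hKdef, mem_closedBall_zero_iff] at hs ⊢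
        simpa using hs
      rw [Set.indicator_of_mem hs', Set.indicator_of_mem hs, inner_neg_right]
    · have hs' : -s ∉ K := by
        rw [hKdef, mem_closedBall_zero_iff] at hs ⊢
        simpa using hs
      rw [Set.indicator_of_notMem hs', Set.indicator_of_notMem hs, neg_zero]
  have h1 : ∫ s, K.indicator (fun s => ⟪u, s⟫) s ∂volume
      = ∫ s, K.indicator (fun s => ⟪u, s⟫) (-s) ∂volume :=
    (integral_neg_eq_self _ _).symm
  have h3 : ∫ s, K.indicator (fun s => ⟪u, s⟫) (-s) ∂volume
      = - ∫ s, K.indicator (fun s => ⟪u, s⟫) s ∂volume := by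
    simp_rw [h2]
    exact integral_neg _
  rw [← integral_indicator hK]
  linarith [h1.trans h3]

/-- Ball smoothing of a convex function with `L`-Lipschitz gradient:
`0 ≤ f_τ(x) − f(x) ≤ L τ² / 2`. -/
theorem smoothing_smooth_bound (n : ℕ) (hn : 0 < n)
    (f : EuclideanSpace ℝ (Fin n) → ℝ)
    (g : EuclideanSpace ℝ (Fin n) → EuclideanSpace ℝ (Fin n)) (L τ : ℝ) (hτ : 0 < τ)
    (hconv : ConvexOn ℝ Set.univ f)
    (hgrad : ∀ x, HasGradientAt f (g x) x)
    (hlip : ∀ x y, ‖g x - g y‖ ≤ L * ‖x - y‖)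
    (μ : Measure (EuclideanSpace ℝ (Fin n)))
    (hμ : μ = (volume (Metric.closedBall (0 : EuclideanSpace ℝ (Fin n)) 1))⁻¹ •
      volume.restrict (Metric.closedBall (0 : EuclideanSpace ℝ (Fin n)) 1))
    (fτ : EuclideanSpace ℝ (Fin n) → ℝ)
    (hfτ : ∀ x, fτ x = ∫ s, f (x + τ • s) ∂μ) :
    ∀ x, 0 ≤ fτ x - f x ∧ fτ x - f x ≤ L * τ ^ 2 / 2 := by
  intro x
  set K := Metric.closedBall (0 : EuclideanSpace ℝ (Fin n)) 1 with hKdef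
  have hKmeas : MeasurableSet K := measurableSet_closedBall
  have hKcompact : IsCompact K := isCompact_closedBall _ _
  have hvol0 : volume K ≠ 0 := (Metric.measure_closedBall_pos volume 0 one_pos).ne'
  have hvolt : volume K ≠ ⊤ := hKcompact.measure_lt_top.ne
  have hproba : IsProbabilityMeasure μ := by
    constructor
    rw [hμ, Measure.smul_apply, Measure.restrict_apply_univ, smul_eq_mul]
    exact ENNReal.inv_mul_cancel hvol0 hvolt
  have hfd : Differentiable ℝ f := fun y => (hgrad y).differentiableAt
  have hfc : Continuous f := hfd.continuous
  have hL0 : 0 ≤ L := by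
    have h := hlip (EuclideanSpace.single (⟨0, hn⟩ : Fin n) (1 : ℝ)) 0
    have hnorm : ‖(EuclideanSpace.single (⟨0, hn⟩ : Fin n) (1 : ℝ)) - 0‖ = 1 := by
      rw [sub_zero, EuclideanSpace.norm_single, norm_one]
    rw [hnorm, mul_one] at h
    exact le_trans (norm_nonneg _) h
  -- integrability
  have hsmul : Continuous fun s : EuclideanSpace ℝ (Fin n) => x + τ • s :=
    continuous_const.add (continuous_id.const_smul τ)
  have hint1 : Integrable (fun s => f (x + τ • s)) μ := by
    rw [hμ]
    refine Integrable.smul_measure ?_ (ENNReal.inv_ne_top.2 hvol0)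
    exact ((hfc.comp hsmul).continuousOn).integrableOn_compact hKcompact
  have hcont2 : Continuous fun s : EuclideanSpace ℝ (Fin n) => ⟪g x, τ • s⟫ := by
    exact (innerSL ℝ (g x)).continuous.comp (continuous_id.const_smul τ)
  have hint2 : Integrable (fun s => ⟪g x, τ • s⟫) μ := by
    rw [hμ]
    exact (hcont2.continuousOn.integrableOn_compact hKcompact).smul_measure (ENNReal.inv_ne_top.2 hvol0)
  -- zero mean
  have hz : ∫ s, ⟪g x, τ • s⟫ ∂μ = 0 := by
    rw [hμ, integral_smul_measure]
    have h4 : ∫ s in K, ⟪g x, τ • s⟫ ∂volume = τ * ∫ s in K, ⟪g x, s⟫ ∂volume := by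
      simp_rw [real_inner_smul_right]
      exact integral_const_mul τ _
    rw [h4, aux_int_zero n (g x), mul_zero, smul_zero]
  -- lower bound
  have hlow : f x ≤ fτ x := by
    rw [hfτ]
    have hmono : ∫ s, (f x + ⟪g x, τ • s⟫) ∂μ ≤ ∫ s, f (x + τ • s) ∂μ :=
      integral_mono ((integrable_const (f x)).add hint2) hint1
        (fun s => aux_lower hconv (hgrad x) (τ • s))
    calc f x = ∫ s, (f x + ⟪g x, τ • s⟫) ∂μ := by
          rw [integral_add (integrable_const _) hint2, hz, integral_const]
          simp
      _ ≤ _ := hmono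
  -- upper bound
  have hub : fτ x ≤ f x + L * τ ^ 2 / 2 := by
    rw [hfτ]
    have hae : ∀ᵐ s ∂μ, f (x + τ • s) ≤ f x + ⟪g x, τ • s⟫ + L * τ ^ 2 / 2 := by
      rw [hμ]
      apply Measure.ae_smul_measure
      filter_upwards [ae_restrict_mem hKmeas] with s hs
      have h1 := aux_upper hgrad hlip x (τ • s)
      have hs1 : ‖s‖ ≤ 1 := mem_closedBall_zero_iff.1 hs
      have h2 : ‖τ • s‖ ^ 2 ≤ τ ^ 2 := by
        rw [norm_smul, Real.norm_eq_abs, abs_of_pos hτ]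
        have h2a : τ * ‖s‖ ≤ τ := by nlinarith
        exact pow_le_pow_left₀ (by positivity) h2a 2
      nlinarith
    have hmono : ∫ s, f (x + τ • s) ∂μ ≤ ∫ s, (f x + ⟪g x, τ • s⟫ + L * τ ^ 2 / 2) ∂μ :=
      integral_mono_ae hint1 (((integrable_const (f x)).add hint2).add (integrable_const _)) hae
    calc ∫ s, f (x + τ • s) ∂μ ≤ _ := hmono
      _ = f x + L * τ ^ 2 / 2 := by
          rw [integral_add (μ := μ) (f := fun s => f x + ⟪g x, τ • s⟫)
              (g := fun _ => L * τ ^ 2 / 2) ((integrable_const _).add hint2) (integrable_const _),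
            integral_add (integrable_const _) hint2, hz, integral_const, integral_const]
          simp
  exact ⟨by linarith, by linarith⟩
end

section
/- (Conjugate duality of smoothness and strong convexity) If f : ℝⁿ → ℝ is μ-strongly convex (μ > 0) with respect to the Euclidean norm, then its Legendre–Fenchel conjugate f*(y) = sup_x (⟨y,x⟩ − f(x)) is differentiable everywhere and ∇f* is (1/μ)-Lipschitz: ‖∇f*(y₁) − ∇f*(y₂)‖₂ ≤ (1/μ)‖y₁ − y₂‖₂. -/
open Set Filter Topology Metric

section Aux

variable {E : Type*} [NormedAddCommGroup E] [InnerProductSpace ℝ E] [FiniteDimensional ℝ E]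
  {μ : ℝ}

private lemma aux_shift (f : E → ℝ) (hsc : StrongConvexOn univ μ f) (y : E) :
    StrongConvexOn univ μ (fun x => f x - (inner ℝ y x : ℝ)) := by
  refine ⟨convex_univ, fun x _ z _ a b ha hb hab => ?_⟩
  have h := hsc.2 (mem_univ x) (mem_univ z) ha hb hab
  simp only [smul_eq_mul] at *
  have hi : (inner ℝ y (a • x + b • z) : ℝ) = a * inner ℝ y x + b * inner ℝ y z := by
    rw [inner_add_right, real_inner_smul_right, real_inner_smul_right]
  rw [hi]
  linarith

private lemma aux_growth (f : E → ℝ) (hμ : 0 < μ) (hg : StrongConvexOn univ μ f)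
    {u : E} (hu : ∀ x, f u ≤ f x) (x : E) :
    f u + μ / 2 * ‖x - u‖ ^ 2 ≤ f x := by
  set c := μ / 2 * ‖x - u‖ ^ 2 with hc
  have hc0 : 0 ≤ c := by positivity
  refine le_of_forall_pos_le_add fun ε hε => ?_
  set t := min 1 (ε / (c + 1)) with ht
  have ht0 : 0 < t := lt_min one_pos (by positivity)
  have ht1 : t ≤ 1 := min_le_left _ _
  have key := hg.2 (mem_univ x) (mem_univ u) ht0.le (by linarith : (0:ℝ) ≤ 1 - t)
    (by ring : t + (1 - t) = 1)
  have hmin := hu (t • x + (1 - t) • u)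
  have htc : t * c ≤ ε := by
    have h1 : t ≤ ε / (c + 1) := min_le_right _ _
    have h2 : t * c ≤ (ε / (c + 1)) * c := by nlinarith
    have h3 : (ε / (c + 1)) * c ≤ ε := by
      rw [div_mul_eq_mul_div, div_le_iff₀ (by positivity)]
      nlinarith
    linarith
  have h4 : t * (f u + (1 - t) * c) ≤ t * f x := by
    simp only [smul_eq_mul, hc] at key hmin ⊢
    nlinarith [key, hmin]
  have h3 : f u + (1 - t) * c ≤ f x := le_of_mul_le_mul_left h4 ht0
  nlinarith [h3, htc]

private lemma aux_exists_min (f : E → ℝ) (hμ : 0 < μ) (hg : StrongConvexOn univ μ f) :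
    ∃ u, ∀ x, f u ≤ f x := by
  have hconv : ConvexOn ℝ univ f := hg.convexOn fun r => by positivity
  have hcont : Continuous f := by
    rw [← continuousOn_univ]
    exact hconv.continuousOn isOpen_univ
  obtain ⟨z₀, hz₀mem, hz₀⟩ := (isCompact_closedBall (0:E) 1).exists_isMinOn
    ⟨0, by simp⟩ hcont.continuousOn
  set K := |f z₀| + |f 0| with hK
  have hbound : ∀ x : E, 2 ≤ ‖x‖ → μ/4 * ‖x‖^2 - ‖x‖ * K ≤ f x := by
    intro x hx
    set R := ‖x‖ with hRdef
    have hR : 0 < R := by linarith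
    have hRne : R ≠ 0 := hR.ne'
    have ha1 : (0:ℝ) ≤ 1/R := by positivity
    have hb1 : (0:ℝ) ≤ 1 - 1/R := by
      rw [sub_nonneg, div_le_one hR]; linarith
    have key := hg.2 (mem_univ x) (mem_univ (0:E)) ha1 hb1
      (show 1/R + (1 - 1/R) = 1 by ring)
    simp only [smul_zero, add_zero, sub_zero, smul_eq_mul] at key
    have hz : (1/R) • x ∈ closedBall (0:E) 1 := by
      rw [mem_closedBall_zero_iff, norm_smul, Real.norm_eq_abs,
        abs_of_pos (by positivity : (0:ℝ) < 1/R)]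
      rw [← hRdef, one_div, inv_mul_cancel₀ hRne]
    have h5 : f z₀ ≤ f ((1/R) • x) := hz₀ hz
    have h6 : f z₀ ≤ (1/R) * f x + (1 - 1/R) * f 0 - (1/R) * (1 - 1/R) * (μ/2 * R^2) :=
      h5.trans key
    have h7 := mul_le_mul_of_nonneg_left h6 hR.le
    have heq : R * ((1/R) * f x + (1 - 1/R) * f 0 - (1/R) * (1 - 1/R) * (μ/2 * R^2))
        = f x + (R - 1) * f 0 - (μ/2 * R^2 - μ/2 * R) := by
      field_simp
    rw [heq] at h7
    have hA : R * (-|f z₀|) ≤ R * f z₀ := mul_le_mul_of_nonneg_left (neg_abs_le _) hR.le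
    have hB : (R - 1) * f 0 ≤ (R - 1) * |f 0| :=
      mul_le_mul_of_nonneg_left (le_abs_self _) (by linarith)
    have hC : 0 ≤ μ/4 * R * (R - 2) := by
      have : (0:ℝ) ≤ R - 2 := by linarith
      positivity
    have habs0 : 0 ≤ |f 0| := abs_nonneg _
    rw [hK]
    nlinarith [h7, hA, hB, hC, habs0]
  have hcoerc : Tendsto f (cocompact E) atTop := by
    have h2 : Tendsto (fun r : ℝ => μ/4 * r + -K) atTop atTop :=
      tendsto_atTop_add_const_right _ (-K) (tendsto_id.const_mul_atTop (by positivity))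
    have h3 := tendsto_id.atTop_mul_atTop₀ h2
    have h1 : Tendsto (fun r : ℝ => μ/4 * r^2 - r * K) atTop atTop :=
      h3.congr fun r => by simp only [id]; ring
    have h4 : Tendsto (fun x : E => μ/4 * ‖x‖^2 - ‖x‖ * K) (cocompact E) atTop :=
      h1.comp tendsto_norm_cocompact_atTop
    refine tendsto_atTop_mono' _ ?_ h4
    filter_upwards [tendsto_norm_cocompact_atTop.eventually (eventually_ge_atTop 2)] with x hx
    exact hbound x hx
  exact hcont.exists_forall_le hcoerc

end Aux

/-- The Legendre–Fenchel conjugate of a `μ`-strongly convex function is differentiable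
with `(1/μ)`-Lipschitz gradient. -/
theorem conjugate_of_strongly_convex (n : ℕ)
    (f : EuclideanSpace ℝ (Fin n) → ℝ) (μ : ℝ) (hμ : 0 < μ)
    (hsc : StrongConvexOn Set.univ μ f)
    (fconj : EuclideanSpace ℝ (Fin n) → ℝ)
    (hconj : ∀ y, fconj y = ⨆ x, ((inner ℝ y x : ℝ) - f x)) :
    ∃ G : EuclideanSpace ℝ (Fin n) → EuclideanSpace ℝ (Fin n),
      (∀ y, HasGradientAt fconj (G y) y) ∧
      ∀ y₁ y₂, ‖G y₁ - G y₂‖ ≤ (1 / μ) * ‖y₁ - y₂‖ := by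
  classical
  have hminex : ∀ y : EuclideanSpace ℝ (Fin n),
      ∃ u, ∀ x, f u - (inner ℝ y u : ℝ) ≤ f x - (inner ℝ y x : ℝ) :=
    fun y => aux_exists_min _ hμ (aux_shift f hsc y)
  choose G hG using hminex
  have gro : ∀ y x, (f (G y) - (inner ℝ y (G y) : ℝ)) + μ/2 * ‖x - G y‖^2
      ≤ f x - (inner ℝ y x : ℝ) :=
    fun y x => aux_growth _ hμ (aux_shift f hsc y) (hG y) x
  have hbdd : ∀ y : EuclideanSpace ℝ (Fin n),
      BddAbove (Set.range fun x => (inner ℝ y x : ℝ) - f x) := fun y =>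
    ⟨(inner ℝ y (G y) : ℝ) - f (G y), by
      rintro v ⟨x, rfl⟩
      show (inner ℝ y x : ℝ) - f x ≤ _
      have := hG y x; linarith⟩
  have hval : ∀ y, fconj y = (inner ℝ y (G y) : ℝ) - f (G y) := by
    intro y
    rw [hconj y]
    apply le_antisymm
    · refine ciSup_le fun x => ?_
      show (inner ℝ y x : ℝ) - f x ≤ _
      have := hG y x; linarith
    · exact le_ciSup (hbdd y) (G y)
  have hlip : ∀ y₁ y₂, ‖G y₁ - G y₂‖ ≤ (1/μ) * ‖y₁ - y₂‖ := by
    intro y₁ y₂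
    have h1 := gro y₁ (G y₂)
    have h2 := gro y₂ (G y₁)
    have e2 : ‖G y₂ - G y₁‖^2 = ‖G y₁ - G y₂‖^2 := by rw [norm_sub_rev]
    rw [e2] at h1
    have hsq : μ * ‖G y₁ - G y₂‖^2 ≤ (inner ℝ (y₁ - y₂) (G y₁ - G y₂) : ℝ) := by
      have hi : (inner ℝ (y₁ - y₂) (G y₁ - G y₂) : ℝ)
          = inner ℝ y₁ (G y₁) - inner ℝ y₁ (G y₂) - inner ℝ y₂ (G y₁) + inner ℝ y₂ (G y₂) := by
        rw [inner_sub_left, inner_sub_right, inner_sub_right]; ring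
      rw [hi]
      linarith
    have hcs : (inner ℝ (y₁ - y₂) (G y₁ - G y₂) : ℝ) ≤ ‖y₁ - y₂‖ * ‖G y₁ - G y₂‖ :=
      real_inner_le_norm _ _
    rcases ((eq_or_lt_of_le (norm_nonneg (G y₁ - G y₂))).imp Eq.symm id) with h | h
    · rw [h]; positivity
    · have hd : μ * ‖G y₁ - G y₂‖ ≤ ‖y₁ - y₂‖ := by
        have := hsq.trans hcs
        nlinarith [h]
      rw [div_mul_eq_mul_div, le_div_iff₀ hμ]
      linarith
  have lower : ∀ y z : EuclideanSpace ℝ (Fin n),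
      fconj y + (inner ℝ (z - y) (G y) : ℝ) ≤ fconj z := by
    intro y z
    have h1 : (inner ℝ z (G y) : ℝ) - f (G y) ≤ fconj z := by
      rw [hconj z]; exact le_ciSup (hbdd z) (G y)
    have h2 : (inner ℝ (z - y) (G y) : ℝ) = inner ℝ z (G y) - inner ℝ y (G y) := inner_sub_left _ _ _
    rw [hval y]
    linarith
  have upper : ∀ y z : EuclideanSpace ℝ (Fin n),
      fconj z ≤ fconj y + (inner ℝ (z - y) (G y) : ℝ) + 1/μ * ‖z - y‖^2 := by
    intro y z
    have hg := gro y (G z)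
    have i1 : (inner ℝ (z - y) (G z) : ℝ) = inner ℝ z (G z) - inner ℝ y (G z) := inner_sub_left _ _ _
    have i2 : (inner ℝ (z - y) (G z) : ℝ)
        = inner ℝ (z - y) (G y) + (inner ℝ (z - y) (G z - G y) : ℝ) := by
      rw [inner_sub_right]; ring
    have i3 : (inner ℝ (z - y) (G z - G y) : ℝ) ≤ ‖z - y‖ * ‖G z - G y‖ := real_inner_le_norm _ _
    have i4 : ‖z - y‖ * ‖G z - G y‖ ≤ ‖z - y‖ * ((1/μ) * ‖z - y‖) :=
      mul_le_mul_of_nonneg_left (hlip z y) (norm_nonneg _)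
    have i5 : ‖z - y‖ * ((1/μ) * ‖z - y‖) = 1/μ * ‖z - y‖^2 := by ring
    have i6 : (0:ℝ) ≤ μ/2 * ‖G z - G y‖^2 := by positivity
    rw [hval y, hval z]
    linarith
  refine ⟨G, fun y => ?_, hlip⟩
  rw [hasGradientAt_iff_hasFDerivAt, hasFDerivAt_iff_isLittleO_nhds_zero,
    Asymptotics.isLittleO_iff]
  intro c hc
  filter_upwards [Metric.closedBall_mem_nhds (0 : EuclideanSpace ℝ (Fin n))
    (show (0:ℝ) < c * μ by positivity)] with h hmem
  have hzb : ‖h‖ ≤ c * μ := by rwa [mem_closedBall_zero_iff] at hmem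
  have hquad : 1/μ * ‖h‖^2 ≤ c * ‖h‖ := by
    rw [div_mul_eq_mul_div, div_le_iff₀ hμ]
    nlinarith [mul_le_mul_of_nonneg_left hzb (norm_nonneg h)]
  have hdual : (InnerProductSpace.toDual ℝ (EuclideanSpace ℝ (Fin n)) (G y)) h
      = (inner ℝ h (G y) : ℝ) := by
    rw [InnerProductSpace.toDual_apply_apply, real_inner_comm]
  have hyh : y + h - y = h := by abel
  have hlo := lower y (y + h)
  have hup := upper y (y + h)
  rw [hyh] at hlo hup
  rw [Real.norm_eq_abs, abs_le, hdual]
  constructor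
  · linarith
  · linarith
end

section
/- (Hölder gradient gives an inexact smooth oracle) Let f be convex with ν-Hölder continuous gradient: ‖∇f(x) − ∇f(y)‖₂ ≤ L_ν ‖x − y‖₂^ν for some ν ∈ (0,1]. Then for every δ > 0, taking L = L_ν · [L_ν(1−ν)/(2δ(1+ν))]^{(1−ν)/(1+ν)}, one has for all x, y: f(y) ≤ f(x) + ⟨∇f(x), y − x⟩ + (L/2)‖y − x‖₂² + δ. -/
open Real
lemma holder_descent (n : ℕ)
    (f : EuclideanSpace ℝ (Fin n) → ℝ)
    (g : EuclideanSpace ℝ (Fin n) → EuclideanSpace ℝ (Fin n))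
    (ν Lν : ℝ) (hν0 : 0 < ν) (hLν : 0 < Lν)
    (hgrad : ∀ x, HasGradientAt f (g x) x)
    (hholder : ∀ x y, ‖g x - g y‖ ≤ Lν * ‖x - y‖ ^ ν)
    (x y : EuclideanSpace ℝ (Fin n)) :
    f y ≤ f x + (inner ℝ (g x) (y - x) : ℝ) + Lν / (1 + ν) * ‖y - x‖ ^ (1 + ν) := by
  have h1p : (0:ℝ) < 1 + ν := by linarith
  set v := y - x with hv
  set c : ℝ → EuclideanSpace ℝ (Fin n) := fun t => x + t • v with hc
  have hcd : ∀ t : ℝ, HasDerivAt c v t := by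
    intro t
    simpa [hc] using ((hasDerivAt_id t).smul_const v).const_add x
  have hF : ∀ t : ℝ, HasDerivAt (fun s => f (c s)) (inner ℝ (g (c t)) v : ℝ) t := by
    intro t
    have := (hgrad (c t)).hasFDerivAt.comp_hasDerivAt t (hcd t)
    simp [InnerProductSpace.toDual_apply_apply] at this
    exact this
  set G : ℝ → ℝ := fun t =>
    f (c t) - t * (inner ℝ (g x) v : ℝ) - Lν * ‖v‖ ^ (1 + ν) / (1 + ν) * t ^ (1 + ν) with hG
  have hG' : ∀ t ∈ Set.Ioo (0:ℝ) 1, HasDerivAt G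
      ((inner ℝ (g (c t)) v : ℝ) - (inner ℝ (g x) v : ℝ)
        - Lν * ‖v‖ ^ (1 + ν) / (1 + ν) * ((1 + ν) * t ^ ν)) t := by
    intro t ht
    have h1 : HasDerivAt (fun s : ℝ => s * (inner ℝ (g x) v : ℝ)) (inner ℝ (g x) v : ℝ) t :=
      hasDerivAt_mul_const _
    have h2 : HasDerivAt (fun s : ℝ => s ^ (1 + ν)) ((1 + ν) * t ^ ν) t := by
      have := Real.hasDerivAt_rpow_const (x := t) (p := 1 + ν) (Or.inl ht.1.ne')
      simpa [add_sub_cancel_left] using this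
    exact ((hF t).sub h1).sub (h2.const_mul _)
  have hcont : ContinuousOn G (Set.Icc 0 1) := by
    have : Continuous G := by
      refine Continuous.sub (Continuous.sub ?_ (by continuity)) ?_
      · exact continuous_iff_continuousAt.2 fun t => (hF t).continuousAt
      · refine Continuous.mul continuous_const ?_
        exact continuous_iff_continuousAt.2 fun t =>
          Real.continuousAt_rpow_const t (1 + ν) (Or.inr h1p.le)
    exact this.continuousOn
  have hanti : AntitoneOn G (Set.Icc 0 1) := by
    apply antitoneOn_of_deriv_nonpos (convex_Icc 0 1) hcont
    · intro t ht
      rw [interior_Icc] at ht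
      exact ((hG' t ht).differentiableAt).differentiableWithinAt
    · intro t ht
      rw [interior_Icc] at ht
      rw [(hG' t ht).deriv]
      have hb : (inner ℝ (g (c t)) v : ℝ) - (inner ℝ (g x) v : ℝ) ≤ Lν * t ^ ν * ‖v‖ ^ (1 + ν) := by
        have e1 : (inner ℝ (g (c t)) v : ℝ) - (inner ℝ (g x) v : ℝ)
            = (inner ℝ (g (c t) - g x) v : ℝ) := by rw [inner_sub_left]
        rw [e1]
        calc (inner ℝ (g (c t) - g x) v : ℝ) ≤ ‖g (c t) - g x‖ * ‖v‖ := real_inner_le_norm _ _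
          _ ≤ Lν * ‖c t - x‖ ^ ν * ‖v‖ := by
              have := hholder (c t) x
              have hvn : (0:ℝ) ≤ ‖v‖ := norm_nonneg _
              nlinarith [norm_nonneg (g (c t) - g x)]
          _ = Lν * t ^ ν * ‖v‖ ^ (1 + ν) := by
              have hct : c t - x = t • v := by simp [hc]
              rw [hct, norm_smul, Real.norm_eq_abs, abs_of_pos ht.1,
                Real.mul_rpow ht.1.le (norm_nonneg v),
                Real.rpow_add' (norm_nonneg v) h1p.ne', Real.rpow_one]
              ring
      have hcancel : Lν * ‖v‖ ^ (1 + ν) / (1 + ν) * ((1 + ν) * t ^ ν)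
          = Lν * t ^ ν * ‖v‖ ^ (1 + ν) := by
        field_simp
      rw [hcancel]
      linarith
  have h01 : (0:ℝ) ∈ Set.Icc (0:ℝ) 1 := by constructor <;> norm_num
  have h11 : (1:ℝ) ∈ Set.Icc (0:ℝ) 1 := by constructor <;> norm_num
  have hle := hanti h01 h11 zero_le_one
  have hc0 : c 0 = x := by simp [hc]
  have hc1 : c 1 = y := by simp [hc, hv]
  have hG0 : G 0 = f x := by
    simp [hG, hc0, Real.zero_rpow h1p.ne']
  have hG1 : G 1 = f y - (inner ℝ (g x) v : ℝ) - Lν * ‖v‖ ^ (1 + ν) / (1 + ν) := by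
    simp [hG, hc1, Real.one_rpow]
  rw [hG0, hG1] at hle
  have : Lν / (1 + ν) * ‖v‖ ^ (1 + ν) = Lν * ‖v‖ ^ (1 + ν) / (1 + ν) := by ring
  rw [this]
  linarith


/-- Scalar inequality: `Lν/(1+ν) r^{1+ν} ≤ L/2 r² + δ`. -/
lemma holder_scalar (ν Lν δ L r : ℝ) (hν : ν ∈ Set.Ioc (0 : ℝ) 1) (hLν : 0 < Lν) (hδ : 0 < δ)
    (hL : L = Lν * (Lν * (1 - ν) / (2 * δ * (1 + ν))) ^ ((1 - ν) / (1 + ν)))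
    (hr : 0 ≤ r) :
    Lν / (1 + ν) * r ^ (1 + ν) ≤ L / 2 * r ^ 2 + δ := by
  obtain ⟨hν0, hν1⟩ := hν
  have h1p : (0:ℝ) < 1 + ν := by linarith
  rcases eq_or_lt_of_le hν1 with heq | hlt
  · -- ν = 1
    subst heq
    have h00 : Lν * (1 - 1) / (2 * δ * (1 + 1)) = 0 := by ring_nf
    rw [h00] at hL
    have hL1 : L = Lν := by
      rw [hL]
      norm_num
    have hr2 : r ^ ((1:ℝ) + 1) = r ^ 2 := by
      rw [show (1:ℝ)+1 = ((2:ℕ):ℝ) by norm_num, Real.rpow_natCast]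
    rw [hr2, hL1]
    norm_num
    linarith
  · -- ν < 1
    have h1m : (0:ℝ) < 1 - ν := by linarith
    have hA : (0:ℝ) < Lν * (1 - ν) / (2 * δ * (1 + ν)) := by positivity
    have hLpos : (0:ℝ) < L := by rw [hL]; positivity
    -- key constant identity
    have hK : (L / (1 + ν)) ^ ((1 + ν) / 2) * (2 * δ / (1 - ν)) ^ ((1 - ν) / 2)
        = Lν / (1 + ν) := by
      have h1 : (0:ℝ) < L / (1 + ν) := by positivity
      have h2 : (0:ℝ) < 2 * δ / (1 - ν) := by positivity
      have h3 : (0:ℝ) < Lν / (1 + ν) := by positivity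
      have hlhs : (0:ℝ) < (L / (1 + ν)) ^ ((1 + ν) / 2) * (2 * δ / (1 - ν)) ^ ((1 - ν) / 2) := by
        positivity
      apply Real.log_injOn_pos (Set.mem_Ioi.2 hlhs) (Set.mem_Ioi.2 h3)
      rw [Real.log_mul (by positivity) (by positivity),
        Real.log_rpow h1, Real.log_rpow h2,
        Real.log_div hLpos.ne' h1p.ne',
        Real.log_div (by positivity) h1m.ne',
        Real.log_div (by positivity) h1p.ne', hL,
        Real.log_mul hLν.ne' (by positivity),
        Real.log_rpow hA,
        Real.log_div (by positivity) (by positivity),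
        Real.log_mul hLν.ne' h1m.ne',
        Real.log_mul (by positivity) h1p.ne',
        Real.log_mul (by norm_num : (2:ℝ) ≠ 0) hδ.ne']
      field_simp
      ring
    -- AM-GM
    have hAM := Real.geom_mean_le_arith_mean2_weighted
      (w₁ := (1 + ν) / 2) (w₂ := (1 - ν) / 2)
      (p₁ := L / (1 + ν) * r ^ 2) (p₂ := 2 * δ / (1 - ν))
      (by positivity) (by positivity) (by positivity) (by positivity) (by ring)
    have hp1 : (L / (1 + ν) * r ^ 2) ^ ((1 + ν) / 2)
        = (L / (1 + ν)) ^ ((1 + ν) / 2) * r ^ (1 + ν) := by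
      rw [Real.mul_rpow (by positivity) (by positivity)]
      congr 1
      rw [← Real.rpow_natCast r 2, ← Real.rpow_mul hr]
      norm_num
      congr 1
      ring
    have hleft : (L / (1 + ν) * r ^ 2) ^ ((1 + ν) / 2) * (2 * δ / (1 - ν)) ^ ((1 - ν) / 2)
        = Lν / (1 + ν) * r ^ (1 + ν) := by
      rw [hp1]
      calc (L / (1 + ν)) ^ ((1 + ν) / 2) * r ^ (1 + ν) * (2 * δ / (1 - ν)) ^ ((1 - ν) / 2)
          = (L / (1 + ν)) ^ ((1 + ν) / 2) * (2 * δ / (1 - ν)) ^ ((1 - ν) / 2) * r ^ (1 + ν) := by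
            ring
        _ = Lν / (1 + ν) * r ^ (1 + ν) := by rw [hK]
    have hright : (1 + ν) / 2 * (L / (1 + ν) * r ^ 2) + (1 - ν) / 2 * (2 * δ / (1 - ν))
        = L / 2 * r ^ 2 + δ := by
      field_simp
    rw [hleft, hright] at hAM
    exact hAM

/-- A convex function with `ν`-Hölder continuous gradient admits a `(δ, L)`-inexact
smooth oracle with `L = L_ν (L_ν(1−ν)/(2δ(1+ν)))^{(1−ν)/(1+ν)}`. -/
theorem holder_gradient_inexact_oracle (n : ℕ)
    (f : EuclideanSpace ℝ (Fin n) → ℝ)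
    (g : EuclideanSpace ℝ (Fin n) → EuclideanSpace ℝ (Fin n))
    (ν Lν δ : ℝ) (hν : ν ∈ Set.Ioc (0 : ℝ) 1) (hLν : 0 < Lν) (hδ : 0 < δ)
    (hconv : ConvexOn ℝ Set.univ f)
    (hgrad : ∀ x, HasGradientAt f (g x) x)
    (hholder : ∀ x y, ‖g x - g y‖ ≤ Lν * ‖x - y‖ ^ ν)
    (L : ℝ)
    (hL : L = Lν * (Lν * (1 - ν) / (2 * δ * (1 + ν))) ^ ((1 - ν) / (1 + ν))) :
    ∀ x y, f y ≤ f x + (inner ℝ (g x) (y - x) : ℝ) + L / 2 * ‖y - x‖ ^ 2 + δ := by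
  intro x y
  have h1 := holder_descent n f g ν Lν hν.1 hLν hgrad hholder x y
  have h2 := holder_scalar ν Lν δ L ‖y - x‖ hν hLν hδ hL (norm_nonneg _)
  linarith
end
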